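/- Let 0 < a ≤ b be real numbers and let u : ℝ → ℝ be continuously differentiable on [a, b]. Then u(b)²/b + (1/2)·∫ₐᵇ u(s)²/s² ds ≤ u(a)²/a + 2·∫ₐᵇ u'(s)² ds. -/

import Mathlib

/-- Hardy-type inequality: for `0 < a ≤ b` and `u` continuously
differentiable on `[a,b]`,
`u(b)²/b + (1/2)·∫ₐᵇ u(s)²/s² ds ≤ u(a)²/a + 2·∫ₐᵇ u'(s)² ds`. -/
theorem stmt_3 (a b : ℝ) (ha : 0 < a) (hab : a ≤ b) (u u' : ℝ → ℝ)
    (hderiv : ∀ s ∈ Set.Icc a b, HasDerivWithinAt u (u' s) (Set.Icc a b) s)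
    (hcont : ContinuousOn u' (Set.Icc a b)) :
    u b ^ 2 / b + (1 / 2) * ∫ s in a..b, u s ^ 2 / s ^ 2 ≤
      u a ^ 2 / a + 2 * ∫ s in a..b, u' s ^ 2 := by
  have hI : Set.uIcc a b = Set.Icc a b := Set.uIcc_of_le hab
  have hpos : ∀ s ∈ Set.Icc a b, 0 < s := fun s hs => lt_of_lt_of_le ha hs.1
  have hne : ∀ s ∈ Set.Icc a b, s ≠ 0 := fun s hs => (hpos s hs).ne'
  have hu : ContinuousOn u (Set.Icc a b) :=
    fun s hs => (hderiv s hs).continuousWithinAt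
  -- continuity of the various integrands
  have hc1 : ContinuousOn (fun s => 2 * u s * u' s / s - u s ^ 2 / s ^ 2) (Set.Icc a b) := by
    exact (((continuousOn_const.mul hu).mul hcont).div continuousOn_id hne).sub
      ((hu.pow 2).div (continuousOn_id.pow 2) (fun s hs => pow_ne_zero 2 (hne s hs)))
  have hc2 : ContinuousOn (fun s => u s ^ 2 / s ^ 2) (Set.Icc a b) :=
    (hu.pow 2).div (continuousOn_id.pow 2) (fun s hs => pow_ne_zero 2 (hne s hs))
  have hc3 : ContinuousOn (fun s => u' s ^ 2) (Set.Icc a b) := hcont.pow 2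
  have hi1 : IntervalIntegrable (fun s => 2 * u s * u' s / s - u s ^ 2 / s ^ 2)
      MeasureTheory.volume a b := (hI ▸ hc1).intervalIntegrable
  have hi2 : IntervalIntegrable (fun s => u s ^ 2 / s ^ 2) MeasureTheory.volume a b :=
    (hI ▸ hc2).intervalIntegrable
  have hi3 : IntervalIntegrable (fun s => u' s ^ 2) MeasureTheory.volume a b :=
    (hI ▸ hc3).intervalIntegrable
  have hi4 : IntervalIntegrable (fun s => 2 * u' s ^ 2 - (1 / 2) * (u s ^ 2 / s ^ 2))
      MeasureTheory.volume a b := (hi3.const_mul 2).sub (hi2.const_mul (1 / 2))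
  -- FTC for F(s) = u(s)^2 / s
  have hFTC : (∫ s in a..b, (2 * u s * u' s / s - u s ^ 2 / s ^ 2)) =
      u b ^ 2 / b - u a ^ 2 / a := by
    apply intervalIntegral.integral_eq_sub_of_hasDeriv_right_of_le hab
    · exact (hu.pow 2).div continuousOn_id hne
    · intro x hx
      have hx' : x ∈ Set.Icc a b := Set.mem_Icc_of_Ioo hx
      have hmem : Set.Icc a b ∈ nhds x := Icc_mem_nhds hx.1 hx.2
      have hd : HasDerivAt u (u' x) x := (hderiv x hx').hasDerivAt hmem
      have hxne : x ≠ 0 := hne x hx'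
      have hD : HasDerivAt (fun s => u s ^ 2 / s)
          ((2 * u x * u' x * x - u x ^ 2 * 1) / x ^ 2) x :=
        HasDerivAt.div (by simpa [mul_comm, mul_assoc] using hd.fun_pow 2) (hasDerivAt_id x) hxne
      have : (2 * u x * u' x * x - u x ^ 2 * 1) / x ^ 2
          = 2 * u x * u' x / x - u x ^ 2 / x ^ 2 := by
        field_simp
      exact (this ▸ hD).hasDerivWithinAt
    · exact hi1
  -- pointwise inequality
  have hmono : (∫ s in a..b, (2 * u s * u' s / s - u s ^ 2 / s ^ 2)) ≤
      ∫ s in a..b, (2 * u' s ^ 2 - (1 / 2) * (u s ^ 2 / s ^ 2)) := by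
    apply intervalIntegral.integral_mono_on hab hi1 hi4
    intro s hs
    have hsne : s ≠ 0 := hne s hs
    have hx2 : u s ^ 2 / s ^ 2 = (u s / s) ^ 2 := by rw [div_pow]
    have hx1 : 2 * u s * u' s / s = 2 * (u s / s) * u' s := by ring
    rw [hx1, hx2]
    nlinarith [sq_nonneg (u s / s - 2 * u' s)]
  have hsplit : (∫ s in a..b, (2 * u' s ^ 2 - (1 / 2) * (u s ^ 2 / s ^ 2))) =
      2 * (∫ s in a..b, u' s ^ 2) - (1 / 2) * ∫ s in a..b, u s ^ 2 / s ^ 2 := by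
    rw [intervalIntegral.integral_sub (hi3.const_mul 2) (hi2.const_mul (1 / 2)),
      intervalIntegral.integral_const_mul, intervalIntegral.integral_const_mul]
  linarith [hFTC ▸ hmono]
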